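/- Let G and H be finitely generated torsion-free nilpotent groups and let T ⊆ H be a subset generating a finite-index subgroup of H. Let Ψ₁, Ψ₂ : Pol(G) → Pol(H) be ℝ-linear maps each of which is: strongly unital (it sends the constant function 1 to the constant function 1, and Ψ_k(ξ)(1_H) = 0 whenever ξ(1_G) = 0); multiplicative (Ψ_k(ξ·η) = Ψ_k(ξ)·Ψ_k(η) for the pointwise products); degree-preserving (Ψ_k(Pol_d(G)) ⊆ Pol_d(H) for all d ∈ ℕ); and co-multiplicative, meaning that for every ξ ∈ Pol(G) there exist finitely many ξ₁, …, ξ_n, ξ₁', …, ξ_n' ∈ Pol(G) such that ξ(g·g') = Σᵢ ξᵢ(g)·ξᵢ'(g') for all g, g' ∈ G and Ψ_k(ξ)(h·h') = Σᵢ Ψ_k(ξᵢ)(h)·Ψ_k(ξᵢ')(h') for all h, h' ∈ H. If Ψ₁(ξ)(t) = Ψ₂(ξ)(t) for every ξ ∈ Pol(G) and every t ∈ T, then Ψ₁ = Ψ₂. (Uniqueness of co-multiplicative degree-preserving algebra homomorphisms of polynomial algebras; in the paper T is the set of degree-one elements of a Mal'cev basis of H, which generates a finite-index subgroup.) -/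

import Mathlib

/-- Torsion-free monoid (the older Mathlib definition, since removed):
no nontrivial element has finite order. -/
def Monoid.IsTorsionFree (G : Type*) [Monoid G] : Prop :=
  ∀ g : G, g ≠ 1 → ¬IsOfFinOrder g

/-- The left difference operator: `(∂_g ξ)(h) = ξ(g⁻¹h) - ξ(h)`. -/
def lDiff {G : Type*} [Group G] (g : G) (ξ : G → ℝ) : G → ℝ :=
  fun h => ξ (g⁻¹ * h) - ξ h

/-- `ξ` is a polynomial map of degree at most `d`. -/
def IsPolyLe {G : Type*} [Group G] (d : ℕ) (ξ : G → ℝ) : Prop :=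
  ∀ gs : List G, gs.length = d + 1 → gs.foldr lDiff ξ = 0

/-- `ξ ∈ Pol(G)`: `ξ` is a polynomial map of some finite degree. -/
def IsPolyMap {G : Type*} [Group G] (ξ : G → ℝ) : Prop :=
  ∃ d : ℕ, IsPolyLe d ξ

/-- `Ψ` is a strongly unital, multiplicative, degree-preserving, co-multiplicative
`ℝ`-linear map `Pol(G) → Pol(H)` (recorded via its action on polynomial maps). -/
def IsGoodHom {G H : Type*} [Group G] [Group H] (Ψ : (G → ℝ) → (H → ℝ)) : Prop :=
  -- ℝ-linearity on polynomial maps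
  (∀ ξ η : G → ℝ, IsPolyMap ξ → IsPolyMap η → Ψ (ξ + η) = Ψ ξ + Ψ η) ∧
  (∀ (c : ℝ) (ξ : G → ℝ), IsPolyMap ξ → Ψ (c • ξ) = c • Ψ ξ) ∧
  -- strongly unital
  (Ψ 1 = 1) ∧
  (∀ ξ : G → ℝ, IsPolyMap ξ → ξ 1 = 0 → Ψ ξ 1 = 0) ∧
  -- multiplicative
  (∀ ξ η : G → ℝ, IsPolyMap ξ → IsPolyMap η → Ψ (ξ * η) = Ψ ξ * Ψ η) ∧
  -- degree-preserving
  (∀ (d : ℕ) (ξ : G → ℝ), IsPolyLe d ξ → IsPolyLe d (Ψ ξ)) ∧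
  -- co-multiplicative
  (∀ ξ : G → ℝ, IsPolyMap ξ → ∃ (n : ℕ) (a b : Fin n → (G → ℝ)),
    (∀ i, IsPolyMap (a i)) ∧ (∀ i, IsPolyMap (b i)) ∧
    (∀ g g' : G, ξ (g * g') = ∑ i, a i g * b i g') ∧
    (∀ h h' : H, Ψ ξ (h * h') = ∑ i, Ψ (a i) h * Ψ (b i) h'))

section Diff

variable {G : Type*} [Group G]

lemma lDiff_add (g : G) (ξ η : G → ℝ) : lDiff g (ξ + η) = lDiff g ξ + lDiff g η := by
  funext x; simp only [lDiff, Pi.add_apply]; ring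

lemma lDiff_smul (g : G) (c : ℝ) (ξ : G → ℝ) : lDiff g (c • ξ) = c • lDiff g ξ := by
  funext x; simp only [lDiff, Pi.smul_apply, smul_eq_mul]; ring

lemma lDiff_sub (g : G) (ξ η : G → ℝ) : lDiff g (ξ - η) = lDiff g ξ - lDiff g η := by
  funext x; simp only [lDiff, Pi.sub_apply]; ring

lemma lDiff_zero (g : G) : lDiff g (0 : G → ℝ) = 0 := by
  funext x; simp [lDiff]

lemma lDiff_const (g : G) (c : ℝ) : lDiff g (fun _ : G => c) = 0 := by
  funext x; simp [lDiff]

lemma foldr_lDiff_add (l : List G) (ξ η : G → ℝ) :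
    l.foldr lDiff (ξ + η) = l.foldr lDiff ξ + l.foldr lDiff η := by
  induction l with
  | nil => rfl
  | cons g l ih => simp only [List.foldr_cons, ih, lDiff_add]

lemma foldr_lDiff_smul (l : List G) (c : ℝ) (ξ : G → ℝ) :
    l.foldr lDiff (c • ξ) = c • l.foldr lDiff ξ := by
  induction l with
  | nil => rfl
  | cons g l ih => simp only [List.foldr_cons, ih, lDiff_smul]

lemma foldr_lDiff_sub (l : List G) (ξ η : G → ℝ) :
    l.foldr lDiff (ξ - η) = l.foldr lDiff ξ - l.foldr lDiff η := by
  induction l with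
  | nil => rfl
  | cons g l ih => simp only [List.foldr_cons, ih, lDiff_sub]

lemma foldr_lDiff_zero (l : List G) : l.foldr lDiff (0 : G → ℝ) = 0 := by
  induction l with
  | nil => rfl
  | cons g l ih => simp only [List.foldr_cons, ih, lDiff_zero]

lemma foldr_lDiff_const_exists (l : List G) (c : ℝ) :
    ∃ c' : ℝ, l.foldr lDiff (fun _ : G => c) = fun _ : G => c' := by
  induction l with
  | nil => exact ⟨c, rfl⟩
  | cons g l ih =>
    obtain ⟨c', hc'⟩ := ih
    refine ⟨0, ?_⟩
    simp only [List.foldr_cons, hc', lDiff_const]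
    rfl

lemma foldr_lDiff_const_eq_zero (l : List G) (c : ℝ) (hl : l ≠ []) :
    l.foldr lDiff (fun _ : G => c) = 0 := by
  cases l with
  | nil => exact absurd rfl hl
  | cons g l =>
    obtain ⟨c', hc'⟩ := foldr_lDiff_const_exists l c
    simp only [List.foldr_cons, hc', lDiff_const]

lemma foldr_lDiff_finsetSum {ι : Type*} (s : Finset ι) (c : ι → ℝ) (f : ι → G → ℝ)
    (l : List G) :
    l.foldr lDiff (∑ i ∈ s, c i • f i) = ∑ i ∈ s, c i • l.foldr lDiff (f i) := by
  induction s using Finset.cons_induction with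
  | empty => simpa using foldr_lDiff_zero l
  | cons j s hj ih =>
    rw [Finset.sum_cons, Finset.sum_cons, foldr_lDiff_add, foldr_lDiff_smul, ih]

lemma IsPolyLe.mono {d e : ℕ} {ξ : G → ℝ} (h : IsPolyLe d ξ) (hde : d ≤ e) :
    IsPolyLe e ξ := by
  intro l hl
  have hsplit : l = l.take (e - d) ++ l.drop (e - d) := (List.take_append_drop _ l).symm
  have hdrop : (l.drop (e - d)).length = d + 1 := by
    rw [List.length_drop, hl]; omega
  rw [hsplit, List.foldr_append, h _ hdrop, foldr_lDiff_zero]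

lemma isPolyLe_const (d : ℕ) (c : ℝ) : IsPolyLe d (fun _ : G => c) := by
  intro l hl
  exact foldr_lDiff_const_eq_zero l c (by intro h; rw [h] at hl; simp at hl)

lemma IsPolyLe.add {d : ℕ} {ξ η : G → ℝ} (hξ : IsPolyLe d ξ) (hη : IsPolyLe d η) :
    IsPolyLe d (ξ + η) := by
  intro l hl
  rw [foldr_lDiff_add, hξ l hl, hη l hl, add_zero]

lemma IsPolyLe.smul {d : ℕ} (c : ℝ) {ξ : G → ℝ} (hξ : IsPolyLe d ξ) :
    IsPolyLe d (c • ξ) := by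
  intro l hl
  rw [foldr_lDiff_smul, hξ l hl, smul_zero]

lemma IsPolyLe.sub {d : ℕ} {ξ η : G → ℝ} (hξ : IsPolyLe d ξ) (hη : IsPolyLe d η) :
    IsPolyLe d (ξ - η) := by
  intro l hl
  rw [foldr_lDiff_sub, hξ l hl, hη l hl, sub_zero]

lemma IsPolyMap.add {ξ η : G → ℝ} (hξ : IsPolyMap ξ) (hη : IsPolyMap η) :
    IsPolyMap (ξ + η) := by
  obtain ⟨d, hd⟩ := hξ; obtain ⟨e, he⟩ := hη
  exact ⟨max d e, (hd.mono (le_max_left d e)).add (he.mono (le_max_right d e))⟩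

lemma IsPolyMap.smul (c : ℝ) {ξ : G → ℝ} (hξ : IsPolyMap ξ) : IsPolyMap (c • ξ) := by
  obtain ⟨d, hd⟩ := hξ; exact ⟨d, hd.smul c⟩

lemma IsPolyMap.sub {ξ η : G → ℝ} (hξ : IsPolyMap ξ) (hη : IsPolyMap η) :
    IsPolyMap (ξ - η) := by
  obtain ⟨d, hd⟩ := hξ; obtain ⟨e, he⟩ := hη
  exact ⟨max d e, (hd.mono (le_max_left d e)).sub (he.mono (le_max_right d e))⟩

lemma isPolyMap_const (c : ℝ) : IsPolyMap (fun _ : G => c) := ⟨0, isPolyLe_const 0 c⟩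

lemma isPolyMap_one : IsPolyMap (1 : G → ℝ) := isPolyMap_const 1

lemma isPolyMap_zero : IsPolyMap (0 : G → ℝ) := isPolyMap_const 0

lemma IsPolyMap.neg {ξ : G → ℝ} (hξ : IsPolyMap ξ) : IsPolyMap (-ξ) := by
  simpa using isPolyMap_zero.sub hξ

lemma isPolyMap_finsetSum {ι : Type*} (s : Finset ι) (f : ι → G → ℝ)
    (h : ∀ i ∈ s, IsPolyMap (f i)) : IsPolyMap (∑ i ∈ s, f i) := by
  induction s using Finset.cons_induction with
  | empty => simpa using isPolyMap_zero
  | cons j s hj ih =>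
    rw [Finset.sum_cons]
    exact (h j (Finset.mem_cons_self j s)).add
      (ih fun i hi => h i (Finset.mem_cons.2 (Or.inr hi)))

end Diff

section Psi

variable {G H : Type*} [Group G] [Group H] {Ψ : (G → ℝ) → (H → ℝ)}

lemma psi_add (hΨ : IsGoodHom Ψ) {ξ η : G → ℝ} (hξ : IsPolyMap ξ) (hη : IsPolyMap η) :
    Ψ (ξ + η) = Ψ ξ + Ψ η := hΨ.1 ξ η hξ hη

lemma psi_smul (hΨ : IsGoodHom Ψ) (c : ℝ) {ξ : G → ℝ} (hξ : IsPolyMap ξ) :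
    Ψ (c • ξ) = c • Ψ ξ := hΨ.2.1 c ξ hξ

lemma psi_zero (hΨ : IsGoodHom Ψ) : Ψ 0 = 0 := by
  have h := psi_smul hΨ 0 (isPolyMap_one (G := G))
  simpa using h

lemma psi_const (hΨ : IsGoodHom Ψ) (c : ℝ) : Ψ (fun _ : G => c) = fun _ : H => c := by
  have h1 : (fun _ : G => c) = c • (1 : G → ℝ) := by funext x; simp
  have h2 : Ψ (c • (1 : G → ℝ)) = c • Ψ 1 := psi_smul hΨ c isPolyMap_one
  rw [h1, h2, hΨ.2.2.1]
  funext x; simp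

lemma psi_neg (hΨ : IsGoodHom Ψ) {ξ : G → ℝ} (hξ : IsPolyMap ξ) : Ψ (-ξ) = -Ψ ξ := by
  have h := psi_smul hΨ (-1) hξ
  simpa using h

lemma psi_sub (hΨ : IsGoodHom Ψ) {ξ η : G → ℝ} (hξ : IsPolyMap ξ) (hη : IsPolyMap η) :
    Ψ (ξ - η) = Ψ ξ - Ψ η := by
  have h : ξ - η = ξ + (-η) := by ring
  rw [h, psi_add hΨ hξ hη.neg, psi_neg hΨ hη]
  ring

lemma psi_finsetSum (hΨ : IsGoodHom Ψ) {ι : Type*} (s : Finset ι) (f : ι → G → ℝ)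
    (h : ∀ i ∈ s, IsPolyMap (f i)) : Ψ (∑ i ∈ s, f i) = ∑ i ∈ s, Ψ (f i) := by
  induction s using Finset.cons_induction with
  | empty => simpa using psi_zero hΨ
  | cons j s hj ih =>
    rw [Finset.sum_cons, Finset.sum_cons,
      psi_add hΨ (h j (Finset.mem_cons_self j s))
        (isPolyMap_finsetSum s f fun i hi => h i (Finset.mem_cons.2 (Or.inr hi))),
      ih fun i hi => h i (Finset.mem_cons.2 (Or.inr hi))]

lemma psi_lincomb (hΨ : IsGoodHom Ψ) {ι : Type*} (s : Finset ι) (c : ι → ℝ) (f : ι → G → ℝ)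
    (h : ∀ i ∈ s, IsPolyMap (f i)) :
    Ψ (∑ i ∈ s, c i • f i) = ∑ i ∈ s, c i • Ψ (f i) := by
  rw [psi_finsetSum hΨ s _ fun i hi => (h i hi).smul (c i)]
  exact Finset.sum_congr rfl fun i hi => psi_smul hΨ (c i) (h i hi)

lemma psi_apply_one (hΨ : IsGoodHom Ψ) {ξ : G → ℝ} (hξ : IsPolyMap ξ) : Ψ ξ 1 = ξ 1 := by
  have hsub : IsPolyMap (ξ - fun _ : G => ξ 1) := hξ.sub (isPolyMap_const _)
  have h0 : Ψ (ξ - fun _ : G => ξ 1) 1 = 0 := hΨ.2.2.2.1 _ hsub (by simp)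
  have hdec : ξ = (ξ - fun _ : G => ξ 1) + (fun _ : G => ξ 1) := by funext x; simp
  calc Ψ ξ 1 = Ψ ((ξ - fun _ : G => ξ 1) + fun _ : G => ξ 1) 1 := by rw [← hdec]
    _ = (Ψ (ξ - fun _ : G => ξ 1) + Ψ (fun _ : G => ξ 1)) 1 := by
        rw [psi_add hΨ hsub (isPolyMap_const _)]
    _ = ξ 1 := by simp [h0, psi_const hΨ]

/-- The linear-independence property of a finite family of functions. -/
def Indep {ι G : Type*} [Group G] (s : Finset ι) (f : ι → G → ℝ) : Prop :=
  ∀ c : ι → ℝ, ∑ i ∈ s, c i • f i = 0 → ∀ i ∈ s, c i = 0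

/-- Well-definedness of the induced bilinear evaluation: if a finite family of
polynomial maps gives a decomposition of the zero function on `G × G`, then the
corresponding `Ψ`-sum vanishes. -/
lemma bilinear_zero (hΨ : IsGoodHom Ψ) (h h' : H) {ι : Type*} :
    ∀ (m : ℕ) (s : Finset ι) (e f : ι → G → ℝ), s.card = m →
    (∀ i ∈ s, IsPolyMap (e i)) → (∀ i ∈ s, IsPolyMap (f i)) →
    (∀ g g' : G, ∑ i ∈ s, e i g * f i g' = 0) →
    ∑ i ∈ s, Ψ (e i) h * Ψ (f i) h' = 0 := by
  intro m
  induction m using Nat.strong_induction_on with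
  | _ m ih =>
  intro s e f hcard he hf hid
  by_cases hind : ∀ c : ι → ℝ, ∑ i ∈ s, c i • f i = 0 → ∀ i ∈ s, c i = 0
  · -- the family `f` is independent on `s`, so each `e i` vanishes
    refine Finset.sum_eq_zero fun i hi => ?_
    have he0 : e i = 0 := by
      funext g
      refine hind (fun j => e j g) ?_ i hi
      funext g'
      simpa [Finset.sum_apply] using hid g g'
    rw [he0, psi_zero hΨ]
    simp
  · push_neg at hind
    obtain ⟨c, hc, j, hj, hcj⟩ := hind
    classical
    set s' := s.erase j with hs'
    have hcard' : s'.card < m := by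
      rw [hs', ← hcard]
      exact Finset.card_erase_lt_of_mem hj
    -- pointwise consequences of hc
    have hcpt : ∀ g' : G, ∑ i ∈ s, c i * f i g' = 0 := by
      intro g'
      have := congrFun hc g'
      simpa [Finset.sum_apply] using this
    have hcpt' : ∀ g' : G, ∑ i ∈ s', c i * f i g' = -(c j * f j g') := by
      intro g'
      have h1 : ∑ i ∈ s', c i * f i g' + c j * f j g' = ∑ i ∈ s, c i * f i g' :=
        Finset.sum_erase_add s (fun i => c i * f i g') hj
      have h2 := hcpt g'
      linarith
    set e' : ι → G → ℝ := fun i => e i - (c i / c j) • e j with he'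
    have hid' : ∀ g g' : G, ∑ i ∈ s', e' i g * f i g' = 0 := by
      intro g g'
      have hsum : ∑ i ∈ s', e' i g * f i g'
          = ∑ i ∈ s', e i g * f i g' - (e j g / c j) * ∑ i ∈ s', c i * f i g' := by
        rw [Finset.mul_sum, ← Finset.sum_sub_distrib]
        refine Finset.sum_congr rfl fun i hi => ?_
        simp only [he', Pi.sub_apply, Pi.smul_apply, smul_eq_mul]
        field_simp
      have hse : ∑ i ∈ s', e i g * f i g' = -(e j g * f j g') := by
        have h1 : ∑ i ∈ s', e i g * f i g' + e j g * f j g' = ∑ i ∈ s, e i g * f i g' :=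
          Finset.sum_erase_add s (fun i => e i g * f i g') hj
        have h2 := hid g g'
        linarith
      rw [hsum, hse, hcpt' g']
      have hcanc : e j g / c j * -(c j * f j g') = -(e j g * f j g') := by
        field_simp
      rw [hcanc]
      ring
    have hpoly' : ∀ i ∈ s', IsPolyMap (e' i) := fun i hi =>
      ((he i (Finset.mem_of_mem_erase hi)).sub ((he j hj).smul _))
    have hres := ih s'.card hcard' s' e' f rfl hpoly'
      (fun i hi => hf i (Finset.mem_of_mem_erase hi)) hid'
    -- expand Ψ (e' i)
    have hΨe' : ∀ i ∈ s', Ψ (e' i) = Ψ (e i) - (c i / c j) • Ψ (e j) := by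
      intro i hi
      rw [he']
      rw [psi_sub hΨ (he i (Finset.mem_of_mem_erase hi)) ((he j hj).smul _),
        psi_smul hΨ _ (he j hj)]
    -- Ψ applied to the dependence relation
    have hΨc : ∑ i ∈ s, c i • Ψ (f i) = 0 := by
      have := psi_lincomb hΨ s c f hf
      rw [hc, psi_zero hΨ] at this
      exact this.symm
    have hΨcpt : ∑ i ∈ s', c i * Ψ (f i) h' = -(c j * Ψ (f j) h') := by
      have h1 : ∑ i ∈ s', c i * Ψ (f i) h' + c j * Ψ (f j) h' = ∑ i ∈ s, c i * Ψ (f i) h' :=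
        Finset.sum_erase_add s (fun i => c i * Ψ (f i) h') hj
      have h2 : ∑ i ∈ s, c i * Ψ (f i) h' = 0 := by
        have := congrFun hΨc h'
        simpa [Finset.sum_apply] using this
      linarith
    have hsum2 : ∑ i ∈ s', Ψ (e' i) h * Ψ (f i) h'
        = ∑ i ∈ s', Ψ (e i) h * Ψ (f i) h'
          - (Ψ (e j) h / c j) * ∑ i ∈ s', c i * Ψ (f i) h' := by
      rw [Finset.mul_sum, ← Finset.sum_sub_distrib]
      refine Finset.sum_congr rfl fun i hi => ?_
      rw [hΨe' i hi]
      simp only [Pi.sub_apply, Pi.smul_apply, smul_eq_mul]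
      field_simp
    have hse2 : ∑ i ∈ s', Ψ (e i) h * Ψ (f i) h' = -(Ψ (e j) h * Ψ (f j) h') := by
      rw [hsum2, hΨcpt] at hres
      have hcanc : Ψ (e j) h / c j * -(c j * Ψ (f j) h') = -(Ψ (e j) h * Ψ (f j) h') := by
        field_simp
      rw [hcanc] at hres
      linarith
    have h1 : ∑ i ∈ s', Ψ (e i) h * Ψ (f i) h' + Ψ (e j) h * Ψ (f j) h'
        = ∑ i ∈ s, Ψ (e i) h * Ψ (f i) h' :=
      Finset.sum_erase_add s (fun i => Ψ (e i) h * Ψ (f i) h') hj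
    rw [← h1, hse2]
    ring

end Psi

section Congr

variable {G H : Type*} [Group G] [Group H] {Ψ : (G → ℝ) → (H → ℝ)}

/-- Any two finite polynomial decompositions of the same two-variable function give the
same `Ψ`-sums. -/
lemma bilinear_congr (hΨ : IsGoodHom Ψ) (h h' : H) {ι κ : Type*}
    (s : Finset ι) (t : Finset κ) (a b : ι → G → ℝ) (a' b' : κ → G → ℝ)
    (ha : ∀ i ∈ s, IsPolyMap (a i)) (hb : ∀ i ∈ s, IsPolyMap (b i))
    (ha' : ∀ i ∈ t, IsPolyMap (a' i)) (hb' : ∀ i ∈ t, IsPolyMap (b' i))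
    (hid : ∀ g g' : G, ∑ i ∈ s, a i g * b i g' = ∑ i ∈ t, a' i g * b' i g') :
    ∑ i ∈ s, Ψ (a i) h * Ψ (b i) h' = ∑ i ∈ t, Ψ (a' i) h * Ψ (b' i) h' := by
  classical
  set u : Finset (ι ⊕ κ) := s.disjSum t with hu
  set E : ι ⊕ κ → G → ℝ := Sum.elim a a' with hE
  set F : ι ⊕ κ → G → ℝ := Sum.elim b (fun k => -(b' k)) with hF
  have hEp : ∀ i ∈ u, IsPolyMap (E i) := by
    intro i hi
    cases i with
    | inl i => exact ha i (by simpa [hu] using hi)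
    | inr k => exact ha' k (by simpa [hu] using hi)
  have hFp : ∀ i ∈ u, IsPolyMap (F i) := by
    intro i hi
    cases i with
    | inl i => exact hb i (by simpa [hu] using hi)
    | inr k => exact (hb' k (by simpa [hu] using hi)).neg
  have hid0 : ∀ g g' : G, ∑ i ∈ u, E i g * F i g' = 0 := by
    intro g g'
    rw [hu, Finset.sum_disjSum]
    simp only [hE, hF, Sum.elim_inl, Sum.elim_inr, Pi.neg_apply]
    have := hid g g'
    have hterm : ∀ x ∈ t, a' x g * -b' x g' = -(a' x g * b' x g') := fun x _ => by ring
    rw [Finset.sum_congr rfl hterm, Finset.sum_neg_distrib]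
    linarith
  have hz := bilinear_zero hΨ h h' u.card u E F rfl hEp hFp hid0
  rw [hu, Finset.sum_disjSum] at hz
  simp only [hE, hF, Sum.elim_inl, Sum.elim_inr] at hz
  have hneg : ∀ k ∈ t, Ψ (-(b' k)) = -Ψ (b' k) := fun k hk => psi_neg hΨ (hb' k hk)
  rw [Finset.sum_congr rfl (fun k hk => by rw [hneg k hk, Pi.neg_apply]; ring :
    ∀ k ∈ t, Ψ (a' k) h * Ψ (-(b' k)) h' = -(Ψ (a' k) h * Ψ (b' k) h'))] at hz
  rw [Finset.sum_neg_distrib] at hz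
  linarith

end Congr

section Reduce

variable {G : Type*} [Group G]

lemma merge_step {ι : Type*} (F : G → G → ℝ) (s : Finset ι) (a b : ι → G → ℝ)
    (hcomp : ∀ i ∈ s, IsPolyMap (a i) ∧ a i 1 = 0 ∧ IsPolyMap (b i) ∧ b i 1 = 0)
    (hid : ∀ g g', ∑ i ∈ s, a i g * b i g' = F g g')
    (hdep : ¬ Indep s b) :
    ∃ (s' : Finset ι) (a' b' : ι → G → ℝ), s'.card < s.card ∧
      (∀ i ∈ s', IsPolyMap (a' i) ∧ a' i 1 = 0 ∧ IsPolyMap (b' i) ∧ b' i 1 = 0) ∧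
      (∀ g g', ∑ i ∈ s', a' i g * b' i g' = F g g') := by
  classical
  unfold Indep at hdep
  push_neg at hdep
  obtain ⟨c, hc, j, hj, hcj⟩ := hdep
  refine ⟨s.erase j, fun i => a i - (c i / c j) • a j, b,
    Finset.card_erase_lt_of_mem hj, ?_, ?_⟩
  · intro i hi
    have hi' := Finset.mem_of_mem_erase hi
    obtain ⟨hai, ha1, hbi, hb1⟩ := hcomp i hi'
    obtain ⟨haj, haj1, _, _⟩ := hcomp j hj
    refine ⟨hai.sub (haj.smul _), ?_, hbi, hb1⟩
    simp [ha1, haj1]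
  · intro g g'
    have hcpt : ∑ i ∈ s, c i * b i g' = 0 := by
      have := congrFun hc g'
      simpa [Finset.sum_apply] using this
    have h1 : ∑ i ∈ s.erase j, c i * b i g' + c j * b j g' = ∑ i ∈ s, c i * b i g' :=
      Finset.sum_erase_add s _ hj
    have h2 : ∑ i ∈ s.erase j, a i g * b i g' + a j g * b j g' = ∑ i ∈ s, a i g * b i g' :=
      Finset.sum_erase_add s _ hj
    have hsum : ∑ i ∈ s.erase j, (a i - (c i / c j) • a j) g * b i g'
        = ∑ i ∈ s.erase j, a i g * b i g'
          - (a j g / c j) * ∑ i ∈ s.erase j, c i * b i g' := by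
      rw [Finset.mul_sum, ← Finset.sum_sub_distrib]
      refine Finset.sum_congr rfl fun i hi => ?_
      simp only [Pi.sub_apply, Pi.smul_apply, smul_eq_mul]
      field_simp
    have hje : ∑ i ∈ s.erase j, c i * b i g' = -(c j * b j g') := by linarith
    rw [hsum, hje]
    have hcanc : a j g / c j * -(c j * b j g') = -(a j g * b j g') := by
      field_simp
    rw [hcanc]
    have := hid g g'
    linarith

lemma reduce {ι : Type*} (F : G → G → ℝ) :
    ∀ (m : ℕ) (s : Finset ι) (a b : ι → G → ℝ), s.card = m →
    (∀ i ∈ s, IsPolyMap (a i) ∧ a i 1 = 0 ∧ IsPolyMap (b i) ∧ b i 1 = 0) →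
    (∀ g g', ∑ i ∈ s, a i g * b i g' = F g g') →
    ∃ (s' : Finset ι) (a' b' : ι → G → ℝ),
      (∀ i ∈ s', IsPolyMap (a' i) ∧ a' i 1 = 0 ∧ IsPolyMap (b' i) ∧ b' i 1 = 0) ∧
      (∀ g g', ∑ i ∈ s', a' i g * b' i g' = F g g') ∧ Indep s' a' ∧ Indep s' b' := by
  intro m
  induction m using Nat.strong_induction_on with
  | _ m ih =>
  intro s a b hcard hcomp hid
  by_cases hb : Indep s b
  · by_cases ha : Indep s a
    · exact ⟨s, a, b, hcomp, hid, ha, hb⟩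
    · have hid' : ∀ g g', ∑ i ∈ s, b i g * a i g' = F g' g := by
        intro g g'
        rw [← hid g' g]
        exact Finset.sum_congr rfl fun i _ => mul_comm _ _
      have hcomp' : ∀ i ∈ s, IsPolyMap (b i) ∧ b i 1 = 0 ∧ IsPolyMap (a i) ∧ a i 1 = 0 := by
        intro i hi; obtain ⟨p1, p2, p3, p4⟩ := hcomp i hi; exact ⟨p3, p4, p1, p2⟩
      obtain ⟨s', b'', a'', hlt, hcomp'', hid''⟩ :=
        merge_step (fun g g' => F g' g) s b a hcomp' hid' ha
      have hcomp2 : ∀ i ∈ s', IsPolyMap (a'' i) ∧ a'' i 1 = 0 ∧ IsPolyMap (b'' i) ∧ b'' i 1 = 0 := by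
        intro i hi; obtain ⟨p1, p2, p3, p4⟩ := hcomp'' i hi; exact ⟨p3, p4, p1, p2⟩
      have hid2 : ∀ g g', ∑ i ∈ s', a'' i g * b'' i g' = F g g' := by
        intro g g'
        have := hid'' g' g
        rw [← this]
        exact Finset.sum_congr rfl fun i _ => mul_comm _ _
      exact ih s'.card (hcard ▸ hlt) s' a'' b'' rfl hcomp2 hid2
  · obtain ⟨s', a', b', hlt, hcomp', hid'⟩ := merge_step F s a b hcomp hid hb
    exact ih s'.card (hcard ▸ hlt) s' a' b' rfl hcomp' hid'

end Reduce

section Degree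

variable {G : Type*} [Group G]

lemma foldr_lDiff_mul_right (ξ : G → ℝ) (g' : G) (l : List G) :
    l.foldr lDiff (fun g => ξ (g * g')) = fun g => (l.foldr lDiff ξ) (g * g') := by
  induction l with
  | nil => rfl
  | cons u l ih =>
    funext x
    simp only [List.foldr_cons, ih, lDiff, mul_assoc]

lemma foldr_lDiff_mul_left (ξ : G → ℝ) (g : G) (l : List G) :
    l.foldr lDiff (fun x => ξ (g * x))
      = fun x => ((l.map (fun u => g * u * g⁻¹)).foldr lDiff ξ) (g * x) := by
  induction l with
  | nil => rfl
  | cons u l ih =>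
    funext x
    simp only [List.foldr_cons, List.map_cons, ih, lDiff]
    have harg : (g * u * g⁻¹)⁻¹ * (g * x) = g * (u⁻¹ * x) := by group
    rw [harg]

lemma foldr_lDiff_conj_translate (ξ : G → ℝ) (g : G) (l : List G) :
    (l.map (fun u => g * u * g⁻¹)).foldr lDiff (fun x => ξ (g⁻¹ * x))
      = fun x => (l.foldr lDiff ξ) (g⁻¹ * x) := by
  induction l with
  | nil => rfl
  | cons u l ih =>
    funext x
    simp only [List.map_cons, List.foldr_cons, ih, lDiff]
    have harg : g⁻¹ * ((g * u * g⁻¹)⁻¹ * x) = u⁻¹ * (g⁻¹ * x) := by group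
    rw [harg]

/-- A `d`-fold difference of a map of degree at most `d` is a constant function. -/
lemma foldr_lDiff_constant {ξ : G → ℝ} {e : ℕ} (hξ : IsPolyLe (e + 1) ξ)
    (l : List G) (hl : l.length = e + 1) (x : G) :
    l.foldr lDiff ξ x = l.foldr lDiff ξ 1 := by
  have h0 : lDiff x⁻¹ (l.foldr lDiff ξ) = 0 := by
    have := hξ (x⁻¹ :: l) (by simp [hl])
    simpa [List.foldr_cons] using this
  have := congrFun h0 1
  simp only [lDiff, inv_inv, mul_one, Pi.zero_apply] at this
  linarith

/-- Conjugation invariance of top-order differences. -/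
lemma foldr_lDiff_conj_const {ξ : G → ℝ} {e : ℕ} (hξ : IsPolyLe (e + 1) ξ)
    (l : List G) (hl : l.length = e + 1) (g x : G) :
    ((l.map (fun u => g * u * g⁻¹)).foldr lDiff ξ) x = (l.foldr lDiff ξ) 1 := by
  have hdec : ξ = (fun y => ξ (g⁻¹ * y)) - lDiff g ξ := by
    funext y
    simp [lDiff]
  have hzero : (l.map (fun u => g * u * g⁻¹)).foldr lDiff (lDiff g ξ) = 0 := by
    have hfold : (l.map (fun u => g * u * g⁻¹) ++ [g]).foldr lDiff ξ = 0 :=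
      hξ _ (by simp [hl])
    rw [List.foldr_append] at hfold
    simpa using hfold
  have h1 : (l.map (fun u => g * u * g⁻¹)).foldr lDiff ξ
      = fun y => (l.foldr lDiff ξ) (g⁻¹ * y) := by
    conv_lhs => rw [hdec]
    rw [foldr_lDiff_sub, hzero, foldr_lDiff_conj_translate]
    funext y
    simp
  rw [h1]
  exact foldr_lDiff_constant hξ l hl _

lemma left_degree {ι : Type*} {ξ : G → ℝ} {e : ℕ} (hξ : IsPolyLe (e + 1) ξ)
    (s : Finset ι) (a b : ι → G → ℝ)
    (hid : ∀ g g', ∑ i ∈ s, a i g * b i g' = ξ (g * g') - ξ g - ξ g' + ξ 1)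
    (hb : Indep s b) : ∀ i ∈ s, IsPolyLe e (a i) := by
  intro i hi l hl
  have hlne : l ≠ [] := by intro h; rw [h] at hl; simp at hl
  -- for each g', the function g ↦ Σ a i g * b i g' has vanishing (e+1)-fold differences
  have key : ∀ g' : G, ∑ j ∈ s, b j g' • l.foldr lDiff (a j) = 0 := by
    intro g'
    have hfn : ∑ j ∈ s, b j g' • a j
        = (fun g => ξ (g * g')) - ξ - (fun _ => ξ g') + (fun _ : G => ξ 1) := by
      funext g
      have := hid g g'
      simp only [Finset.sum_apply, Pi.smul_apply, smul_eq_mul, Pi.add_apply, Pi.sub_apply]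
      rw [Finset.sum_congr rfl fun j _ => (mul_comm (b j g') (a j g))]
      linarith
    have hfold := foldr_lDiff_finsetSum s (fun j => b j g') a l
    rw [hfn] at hfold
    rw [← hfold]
    rw [foldr_lDiff_add, foldr_lDiff_sub, foldr_lDiff_sub,
      foldr_lDiff_mul_right, foldr_lDiff_const_eq_zero l _ hlne,
      foldr_lDiff_const_eq_zero l _ hlne]
    funext x
    simp only [Pi.add_apply, Pi.sub_apply, Pi.zero_apply]
    rw [foldr_lDiff_constant hξ l hl (x * g'), foldr_lDiff_constant hξ l hl x]
    ring
  have hz : ∀ x : G, l.foldr lDiff (a i) x = 0 := by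
    intro x
    refine hb (fun j => l.foldr lDiff (a j) x) ?_ i hi
    funext g'
    have := congrFun (key g') x
    simp only [Finset.sum_apply, Pi.smul_apply, smul_eq_mul, Pi.zero_apply] at this ⊢
    rw [← this]
    exact Finset.sum_congr rfl fun j _ => mul_comm _ _
  funext x
  exact hz x

lemma right_degree {ι : Type*} {ξ : G → ℝ} {e : ℕ} (hξ : IsPolyLe (e + 1) ξ)
    (s : Finset ι) (a b : ι → G → ℝ)
    (hid : ∀ g g', ∑ i ∈ s, a i g * b i g' = ξ (g * g') - ξ g - ξ g' + ξ 1)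
    (ha : Indep s a) : ∀ i ∈ s, IsPolyLe e (b i) := by
  intro i hi l hl
  have hlne : l ≠ [] := by intro h; rw [h] at hl; simp at hl
  have key : ∀ g : G, ∑ j ∈ s, a j g • l.foldr lDiff (b j) = 0 := by
    intro g
    have hfn : ∑ j ∈ s, a j g • b j
        = (fun x => ξ (g * x)) - (fun _ => ξ g) - ξ + (fun _ : G => ξ 1) := by
      funext x
      have := hid g x
      simp only [Finset.sum_apply, Pi.smul_apply, smul_eq_mul, Pi.add_apply, Pi.sub_apply]
      linarith
    have hfold := foldr_lDiff_finsetSum s (fun j => a j g) b l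
    rw [hfn] at hfold
    rw [← hfold]
    rw [foldr_lDiff_add, foldr_lDiff_sub, foldr_lDiff_sub,
      foldr_lDiff_mul_left, foldr_lDiff_const_eq_zero l _ hlne,
      foldr_lDiff_const_eq_zero l _ hlne]
    funext x
    simp only [Pi.add_apply, Pi.sub_apply, Pi.zero_apply]
    rw [foldr_lDiff_conj_const hξ l hl g (g * x), foldr_lDiff_constant hξ l hl x]
    ring
  have hz : ∀ x : G, l.foldr lDiff (b i) x = 0 := by
    intro x
    refine ha (fun j => l.foldr lDiff (b j) x) ?_ i hi
    funext g
    have := congrFun (key g) x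
    simp only [Finset.sum_apply, Pi.smul_apply, smul_eq_mul, Pi.zero_apply] at this ⊢
    rw [← this]
    exact Finset.sum_congr rfl fun j _ => mul_comm _ _
  funext x
  exact hz x

end Degree

section Decomp

variable {G H : Type*} [Group G] [Group H] {Ψ : (G → ℝ) → (H → ℝ)}

lemma reduced_of_decomp {n : ℕ} (ξ : G → ℝ) (a₀ b₀ : Fin n → G → ℝ)
    (hid : ∀ g g' : G, ξ (g * g') = ∑ i, a₀ i g * b₀ i g') (g g' : G) :
    ∑ i, (a₀ i g - a₀ i 1) * (b₀ i g' - b₀ i 1) = ξ (g * g') - ξ g - ξ g' + ξ 1 := by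
  have h1 : ∑ i, a₀ i 1 * b₀ i g' = ξ g' := by
    have := hid 1 g'; rw [one_mul] at this; exact this.symm
  have h2 : ∑ i, a₀ i g * b₀ i 1 = ξ g := by
    have := hid g 1; rw [mul_one] at this; exact this.symm
  have h3 : ∑ i, a₀ i 1 * b₀ i 1 = ξ 1 := by
    have := hid 1 1; rw [one_mul] at this; exact this.symm
  have h0 : ∑ i, a₀ i g * b₀ i g' = ξ (g * g') := (hid g g').symm
  have hexp : ∑ i, (a₀ i g - a₀ i 1) * (b₀ i g' - b₀ i 1)
      = ∑ i, a₀ i g * b₀ i g' - ∑ i, a₀ i 1 * b₀ i g'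
        - ∑ i, a₀ i g * b₀ i 1 + ∑ i, a₀ i 1 * b₀ i 1 := by
    rw [← Finset.sum_sub_distrib, ← Finset.sum_sub_distrib, ← Finset.sum_add_distrib]
    exact Finset.sum_congr rfl fun i _ => by ring
  rw [hexp, h0, h1, h2, h3]
  ring

/-- Existence of a reduced decomposition with components of strictly smaller degree. -/
lemma good_decomp (hΨ : IsGoodHom Ψ) {ξ : G → ℝ} {e : ℕ} (hξ : IsPolyLe (e + 1) ξ) :
    ∃ (n : ℕ) (s : Finset (Fin n)) (a b : Fin n → G → ℝ),
      (∀ i ∈ s, IsPolyLe e (a i) ∧ a i 1 = 0 ∧ IsPolyLe e (b i) ∧ b i 1 = 0) ∧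
      (∀ g g' : G, ξ (g * g') = ξ g + ξ g' - ξ 1 + ∑ i ∈ s, a i g * b i g') := by
  classical
  obtain ⟨n, a₀, b₀, ha₀, hb₀, hid₀, -⟩ := hΨ.2.2.2.2.2.2 ξ ⟨e + 1, hξ⟩
  set A : Fin n → G → ℝ := fun j => a₀ j - fun _ => a₀ j 1 with hA
  set B : Fin n → G → ℝ := fun j => b₀ j - fun _ => b₀ j 1 with hB
  have hcomp : ∀ i ∈ (Finset.univ : Finset (Fin n)),
      IsPolyMap (A i) ∧ A i 1 = 0 ∧ IsPolyMap (B i) ∧ B i 1 = 0 := by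
    intro i _
    refine ⟨(ha₀ i).sub (isPolyMap_const _), by simp [hA],
      (hb₀ i).sub (isPolyMap_const _), by simp [hB]⟩
  have hidF : ∀ g g' : G, ∑ i ∈ Finset.univ, A i g * B i g'
      = ξ (g * g') - ξ g - ξ g' + ξ 1 := by
    intro g g'
    have := reduced_of_decomp ξ a₀ b₀ hid₀ g g'
    simpa [hA, hB] using this
  obtain ⟨s, a, b, hcomp', hid', hia, hib⟩ :=
    reduce (fun g g' => ξ (g * g') - ξ g - ξ g' + ξ 1)
      (Finset.univ : Finset (Fin n)).card Finset.univ A B rfl hcomp hidF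
  have hdega : ∀ i ∈ s, IsPolyLe e (a i) := left_degree hξ s a b hid' hib
  have hdegb : ∀ i ∈ s, IsPolyLe e (b i) := right_degree hξ s a b hid' hia
  refine ⟨n, s, a, b, fun i hi =>
    ⟨hdega i hi, (hcomp' i hi).2.1, hdegb i hi, (hcomp' i hi).2.2.2⟩, fun g g' => ?_⟩
  have := hid' g g'
  linarith

/-- The coproduct identity holds in `Ψ`-image form for *any* reduced polynomial
decomposition. -/
lemma psi_decomp_eval (hΨ : IsGoodHom Ψ) {ξ : G → ℝ} (hξ : IsPolyMap ξ) {ι : Type*}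
    (s : Finset ι) (a b : ι → G → ℝ)
    (hcomp : ∀ i ∈ s, IsPolyMap (a i) ∧ a i 1 = 0 ∧ IsPolyMap (b i) ∧ b i 1 = 0)
    (hid : ∀ g g' : G, ξ (g * g') = ξ g + ξ g' - ξ 1 + ∑ i ∈ s, a i g * b i g')
    (h h' : H) :
    Ψ ξ (h * h') = Ψ ξ h + Ψ ξ h' - ξ 1 + ∑ i ∈ s, Ψ (a i) h * Ψ (b i) h' := by
  classical
  obtain ⟨n, a₀, b₀, ha₀, hb₀, hid₀, hΨid₀⟩ := hΨ.2.2.2.2.2.2 ξ hξ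
  set A : Fin n → G → ℝ := fun j => a₀ j - fun _ => a₀ j 1 with hA
  set B : Fin n → G → ℝ := fun j => b₀ j - fun _ => b₀ j 1 with hB
  have hApoly : ∀ j, IsPolyMap (A j) := fun j => (ha₀ j).sub (isPolyMap_const _)
  have hBpoly : ∀ j, IsPolyMap (B j) := fun j => (hb₀ j).sub (isPolyMap_const _)
  have h11 : ∑ j, a₀ j 1 * b₀ j 1 = ξ 1 := by
    have := hid₀ 1 1; rw [one_mul] at this; exact this.symm
  -- Ψ of the reduced components
  have hΨA : ∀ j, Ψ (A j) = Ψ (a₀ j) - fun _ => a₀ j 1 := fun j => by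
    rw [hA, psi_sub hΨ (ha₀ j) (isPolyMap_const _), psi_const hΨ]
  have hΨB : ∀ j, Ψ (B j) = Ψ (b₀ j) - fun _ => b₀ j 1 := fun j => by
    rw [hB, psi_sub hΨ (hb₀ j) (isPolyMap_const _), psi_const hΨ]
  -- the two linear-combination identities
  have hlinB : (∑ j, (a₀ j 1) • B j) = ξ - fun _ => ξ 1 := by
    funext g'
    have h1 : ∑ j, a₀ j 1 * b₀ j g' = ξ g' := by
      have := hid₀ 1 g'; rw [one_mul] at this; exact this.symm
    simp only [Finset.sum_apply, Pi.smul_apply, Pi.sub_apply, smul_eq_mul, hB]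
    have : ∑ j, a₀ j 1 * (b₀ j g' - b₀ j 1)
        = ∑ j, a₀ j 1 * b₀ j g' - ∑ j, a₀ j 1 * b₀ j 1 := by
      rw [← Finset.sum_sub_distrib]
      exact Finset.sum_congr rfl fun j _ => by ring
    rw [this, h1, h11]
  have hlinA : (∑ j, (b₀ j 1) • A j) = ξ - fun _ => ξ 1 := by
    funext g
    have h2 : ∑ j, a₀ j g * b₀ j 1 = ξ g := by
      have := hid₀ g 1; rw [mul_one] at this; exact this.symm
    simp only [Finset.sum_apply, Pi.smul_apply, Pi.sub_apply, smul_eq_mul, hA]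
    have : ∑ j, b₀ j 1 * (a₀ j g - a₀ j 1)
        = ∑ j, a₀ j g * b₀ j 1 - ∑ j, a₀ j 1 * b₀ j 1 := by
      rw [← Finset.sum_sub_distrib]
      exact Finset.sum_congr rfl fun j _ => by ring
    rw [this, h2, h11]
  -- their Ψ-images, evaluated
  have hT2 : ∑ j, (a₀ j 1) * Ψ (B j) h' = Ψ ξ h' - ξ 1 := by
    have := psi_lincomb hΨ Finset.univ (fun j => a₀ j 1) B (fun j _ => hBpoly j)
    rw [hlinB, psi_sub hΨ hξ (isPolyMap_const _), psi_const hΨ] at this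
    have hev := congrFun this h'
    simp only [Finset.sum_apply, Pi.smul_apply, Pi.sub_apply, smul_eq_mul] at hev
    linarith [hev.symm]
  have hT3 : ∑ j, (b₀ j 1) * Ψ (A j) h = Ψ ξ h - ξ 1 := by
    have := psi_lincomb hΨ Finset.univ (fun j => b₀ j 1) A (fun j _ => hApoly j)
    rw [hlinA, psi_sub hΨ hξ (isPolyMap_const _), psi_const hΨ] at this
    have hev := congrFun this h
    simp only [Finset.sum_apply, Pi.smul_apply, Pi.sub_apply, smul_eq_mul] at hev
    linarith [hev.symm]
  -- expand the coproduct axiom sum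
  have hexp : ∑ j, Ψ (a₀ j) h * Ψ (b₀ j) h'
      = ∑ j, Ψ (A j) h * Ψ (B j) h' + ∑ j, (a₀ j 1) * Ψ (B j) h'
        + ∑ j, (b₀ j 1) * Ψ (A j) h + ∑ j, a₀ j 1 * b₀ j 1 := by
    rw [← Finset.sum_add_distrib, ← Finset.sum_add_distrib, ← Finset.sum_add_distrib]
    refine Finset.sum_congr rfl fun j _ => ?_
    have e1 : Ψ (a₀ j) h = Ψ (A j) h + a₀ j 1 := by
      have := congrFun (hΨA j) h
      simp only [Pi.sub_apply] at this
      linarith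
    have e2 : Ψ (b₀ j) h' = Ψ (B j) h' + b₀ j 1 := by
      have := congrFun (hΨB j) h'
      simp only [Pi.sub_apply] at this
      linarith
    rw [e1, e2]
    ring
  -- compare the two reduced decompositions
  have hcongr : ∑ j, Ψ (A j) h * Ψ (B j) h' = ∑ i ∈ s, Ψ (a i) h * Ψ (b i) h' := by
    refine bilinear_congr hΨ h h' Finset.univ s A B a b
      (fun j _ => hApoly j) (fun j _ => hBpoly j)
      (fun i hi => (hcomp i hi).1) (fun i hi => (hcomp i hi).2.2.1) ?_
    intro g g'
    have hred := reduced_of_decomp ξ a₀ b₀ hid₀ g g'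
    have hgiven := hid g g'
    have : ∑ j, A j g * B j g' = ξ (g * g') - ξ g - ξ g' + ξ 1 := by
      simpa [hA, hB] using hred
    rw [this]
    linarith
  have hfinal := hΨid₀ h h'
  rw [hexp, hcongr, hT2, hT3, h11] at hfinal
  rw [hfinal]
  ring

end Decomp

section IntDiff

/-- Backward difference operator on integer sequences. -/
def dInt (ψ : ℤ → ℝ) : ℤ → ℝ := fun n => ψ (n - 1) - ψ n

/-- `ψ` is a polynomial sequence of degree at most `d`. -/
def VdInt (d : ℕ) (ψ : ℤ → ℝ) : Prop := dInt^[d + 1] ψ = 0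

lemma dInt_iterate_shift (s : ℤ) (ψ : ℤ → ℝ) :
    ∀ k : ℕ, dInt^[k] (fun n => ψ (n - s)) = fun n => (dInt^[k] ψ) (n - s) := by
  intro k
  induction k with
  | zero => rfl
  | succ k ih =>
    rw [Function.iterate_succ_apply', Function.iterate_succ_apply', ih]
    funext n
    simp only [dInt]
    congr 2
    ring

lemma dInt_iterate_add (ψ χ : ℤ → ℝ) :
    ∀ k : ℕ, dInt^[k] (fun n => ψ n + χ n) = fun n => (dInt^[k] ψ) n + (dInt^[k] χ) n := by
  intro k
  induction k with
  | zero => rfl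
  | succ k ih =>
    rw [Function.iterate_succ_apply', Function.iterate_succ_apply',
      Function.iterate_succ_apply', ih]
    funext n
    simp only [dInt]
    ring

lemma VdInt.shift {d : ℕ} {ψ : ℤ → ℝ} (h : VdInt d ψ) (s : ℤ) :
    VdInt d (fun n => ψ (n - s)) := by
  unfold VdInt at h ⊢
  rw [dInt_iterate_shift, h]
  funext n
  simp

lemma VdInt.add {d : ℕ} {ψ χ : ℤ → ℝ} (hψ : VdInt d ψ) (hχ : VdInt d χ) :
    VdInt d (fun n => ψ n + χ n) := by
  unfold VdInt at hψ hχ ⊢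
  rw [dInt_iterate_add, hψ, hχ]
  funext n
  simp

lemma VdInt.dInt {d : ℕ} {ψ : ℤ → ℝ} (h : VdInt (d + 1) ψ) : VdInt d (dInt ψ) := by
  unfold VdInt at h ⊢
  rw [← Function.iterate_succ_apply]
  exact h

/-- The `m`-step difference of a polynomial sequence of degree `d+1` has degree `d`. -/
lemma vdInt_msub {d : ℕ} {ψ : ℤ → ℝ} (h : VdInt (d + 1) ψ) :
    ∀ m : ℕ, VdInt d (fun n => ψ (n - m) - ψ n) := by
  intro m
  induction m with
  | zero =>
    have : (fun n : ℤ => ψ (n - (0 : ℕ)) - ψ n) = fun _ => 0 + 0 := by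
      funext n; simp
    rw [this]
    unfold VdInt
    have z : VdInt d (fun _ : ℤ => (0:ℝ)) := by
      unfold VdInt
      have : ∀ k : ℕ, dInt^[k] (fun _ : ℤ => (0:ℝ)) = fun _ => 0 := by
        intro k
        induction k with
        | zero => rfl
        | succ k ih => rw [Function.iterate_succ_apply', ih]; funext n; simp [dInt]
      rw [this (d+1)]; funext n; rfl
    have := z.add z
    unfold VdInt at this
    convert this using 2
  | succ m ih =>
    have hdec : (fun n : ℤ => ψ (n - (m + 1 : ℕ)) - ψ n)
        = fun n => ((fun k => ψ (k - m) - ψ k) (n - 1)) + dInt ψ n := by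
      funext n
      simp only [dInt]
      have harg : n - ((m:ℤ) + 1) = n - 1 - (m:ℤ) := by ring
      push_cast
      rw [harg]
      ring
    rw [hdec]
    exact (ih.shift 1).add h.dInt

lemma linear_of_dInt_const {ψ : ℤ → ℝ} {c : ℝ} (h : ∀ n, dInt ψ n = c) :
    ∀ n : ℤ, ψ n = ψ 0 - c * n := by
  intro n
  induction n using Int.induction_on with
  | zero => simp
  | succ k ihk =>
    have hstep := h ((k:ℤ) + 1)
    simp only [dInt, add_sub_cancel_right] at hstep
    have hval : ψ ((k:ℤ) + 1) = ψ k - c := by linarith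
    rw [hval, ihk]
    push_cast
    ring
  | pred k ihk =>
    have hstep := h (-(k:ℤ))
    simp only [dInt] at hstep
    have harg : -(k:ℤ) - 1 = -((k:ℤ) + 1) := by ring
    rw [harg] at hstep
    have hval : ψ (-((k:ℤ) + 1)) = c + ψ (-(k:ℤ)) := by linarith
    rw [show -(k:ℤ) - 1 = -((k:ℤ) + 1) from by ring, hval, ihk]
    push_cast
    ring

lemma const_of_periodic : ∀ (d : ℕ) (ψ : ℤ → ℝ) (m : ℕ), 1 ≤ m → VdInt d ψ →
    (∀ n, ψ (n - m) = ψ n) → ∀ n, ψ n = ψ 0 := by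
  intro d
  induction d with
  | zero =>
    intro ψ m hm h hper n
    have hd : ∀ k, dInt ψ k = 0 := by
      intro k
      have : dInt^[1] ψ = 0 := h
      rw [show dInt^[1] ψ = dInt ψ from rfl] at this
      exact congrFun this k
    have := linear_of_dInt_const hd n
    simpa using this
  | succ d ih =>
    intro ψ m hm h hper n
    have hχ : VdInt d (dInt ψ) := h.dInt
    have hχper : ∀ k, dInt ψ (k - m) = dInt ψ k := by
      intro k
      simp only [dInt]
      rw [show (k : ℤ) - m - 1 = (k - 1) - m from by ring, hper (k - 1), hper k]
    have hχconst : ∀ k, dInt ψ k = dInt ψ 0 := ih (dInt ψ) m hm hχ hχper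
    have hlin := linear_of_dInt_const hχconst
    have hc0 : dInt ψ 0 = 0 := by
      have h1 := hlin (-(m : ℤ))
      have h2 : ψ (0 - (m:ℤ)) = ψ 0 := hper 0
      rw [show (0:ℤ) - (m:ℤ) = -(m:ℤ) from by ring] at h2
      rw [h2] at h1
      have hmne : (m : ℝ) ≠ 0 := by
        simp only [ne_eq, Nat.cast_eq_zero]
        omega
      have : dInt ψ 0 * (m : ℝ) = 0 := by
        push_cast at h1
        linarith
      rcases mul_eq_zero.1 this with h | h
      · exact h
      · exact absurd h hmne
    have := hlin n
    rw [hc0] at this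
    simpa using this

lemma zero_of_multiples : ∀ (d : ℕ) (ψ : ℤ → ℝ) (m : ℕ), 1 ≤ m → VdInt d ψ →
    (∀ k : ℤ, ψ (m * k) = 0) → ∀ n, ψ n = 0 := by
  intro d
  induction d with
  | zero =>
    intro ψ m hm h hmul n
    have hd : ∀ k, dInt ψ k = 0 := fun k => congrFun h k
    have := linear_of_dInt_const hd n
    have h0 : ψ 0 = 0 := by
      have := hmul 0
      simpa using this
    simpa [h0] using this
  | succ d ih =>
    intro ψ m hm h hmul n
    set χ : ℤ → ℝ := fun k => ψ (k - m) - ψ k with hχ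
    have hχvd : VdInt d χ := vdInt_msub h m
    have hχmul : ∀ k : ℤ, χ (m * k) = 0 := by
      intro k
      rw [hχ]
      simp only
      rw [show (m : ℤ) * k - m = m * (k - 1) from by ring, hmul (k-1), hmul k]
      ring
    have hχ0 : ∀ k, χ k = 0 := ih χ m hm hχvd hχmul
    have hper : ∀ k, ψ (k - m) = ψ k := by
      intro k
      have := hχ0 k
      rw [hχ] at this
      simp only at this
      linarith
    have hconst := const_of_periodic (d+1) ψ m hm h hper
    have h0 : ψ 0 = 0 := by simpa using hmul 0
    rw [hconst n, h0]

end IntDiff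

section Main

variable {G H : Type*} [Group G] [Group H] {Ψ₁ Ψ₂ : (G → ℝ) → (H → ℝ)}

lemma isPolyLe_zero_const {ξ : G → ℝ} (h : IsPolyLe 0 ξ) : ξ = fun _ => ξ 1 := by
  funext x
  have h0 := h [x⁻¹] rfl
  have := congrFun h0 1
  simp only [List.foldr_cons, List.foldr_nil, lDiff, inv_inv, mul_one, Pi.zero_apply] at this
  linarith

lemma agree_on_closure (h₁ : IsGoodHom Ψ₁) (h₂ : IsGoodHom Ψ₂) (T : Set H)
    (hagree : ∀ ξ : G → ℝ, IsPolyMap ξ → ∀ t ∈ T, Ψ₁ ξ t = Ψ₂ ξ t) :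
    ∀ (d : ℕ) (ξ : G → ℝ), IsPolyLe d ξ → ∀ h ∈ Subgroup.closure T, Ψ₁ ξ h = Ψ₂ ξ h := by
  intro d
  induction d with
  | zero =>
    intro ξ hξ h _
    have hc := isPolyLe_zero_const hξ
    rw [hc, psi_const h₁, psi_const h₂]
  | succ e ih =>
    intro ξ hξ
    obtain ⟨n, s, a, b, hcomp, hid⟩ := good_decomp h₁ hξ
    have hcomp' : ∀ i ∈ s, IsPolyMap (a i) ∧ a i 1 = 0 ∧ IsPolyMap (b i) ∧ b i 1 = 0 :=
      fun i hi => ⟨⟨e, (hcomp i hi).1⟩, (hcomp i hi).2.1,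
        ⟨e, (hcomp i hi).2.2.1⟩, (hcomp i hi).2.2.2⟩
    have hξp : IsPolyMap ξ := ⟨e + 1, hξ⟩
    have E₁ := psi_decomp_eval h₁ hξp s a b hcomp' hid
    have E₂ := psi_decomp_eval h₂ hξp s a b hcomp' hid
    intro h hmem
    induction hmem using Subgroup.closure_induction with
    | mem t ht => exact hagree ξ hξp t ht
    | one => rw [psi_apply_one h₁ hξp, psi_apply_one h₂ hξp]
    | mul x y hx hy px py =>
      have hsums : ∑ i ∈ s, Ψ₁ (a i) x * Ψ₁ (b i) y
          = ∑ i ∈ s, Ψ₂ (a i) x * Ψ₂ (b i) y :=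
        Finset.sum_congr rfl fun i hi => by
          rw [ih (a i) (hcomp i hi).1 x hx, ih (b i) (hcomp i hi).2.2.1 y hy]
      rw [E₁ x y, E₂ x y, px, py, hsums]
    | inv x hx px =>
      have e₁ := E₁ x⁻¹ x
      have e₂ := E₂ x⁻¹ x
      rw [inv_mul_cancel, psi_apply_one h₁ hξp] at e₁
      rw [inv_mul_cancel, psi_apply_one h₂ hξp] at e₂
      have hsums : ∑ i ∈ s, Ψ₁ (a i) x⁻¹ * Ψ₁ (b i) x
          = ∑ i ∈ s, Ψ₂ (a i) x⁻¹ * Ψ₂ (b i) x :=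
        Finset.sum_congr rfl fun i hi => by
          rw [ih (a i) (hcomp i hi).1 x⁻¹ (inv_mem hx), ih (b i) (hcomp i hi).2.2.1 x hx]
      rw [hsums, px] at e₁
      linarith

lemma foldr_replicate_dInt (D : H → ℝ) (h : H) :
    ∀ (k : ℕ) (n : ℤ), dInt^[k] (fun n : ℤ => D (h ^ n)) n
      = ((List.replicate k h).foldr lDiff D) (h ^ n) := by
  intro k
  induction k with
  | zero => intro n; rfl
  | succ k ih =>
    intro n
    rw [Function.iterate_succ_apply', List.replicate_succ, List.foldr_cons]
    show (dInt^[k] fun n : ℤ => D (h ^ n)) (n - 1)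
        - (dInt^[k] fun n : ℤ => D (h ^ n)) n = _
    rw [ih (n - 1), ih n]
    simp only [lDiff]
    rw [show h ^ (n - 1) = h⁻¹ * h ^ n from by
      rw [← zpow_neg_one, ← zpow_add]; congr 1; ring]

end Main

/-- Uniqueness of strongly unital, co-multiplicative, degree-preserving algebra
homomorphisms of polynomial algebras of finitely generated torsion-free nilpotent
groups: two such maps agreeing at every point of a set `T ⊆ H` generating a
finite-index subgroup agree on all of `Pol(G)`. -/
theorem stmt18 {G H : Type*} [Group G] [Group H]
    [Group.FG G] (hGtf : Monoid.IsTorsionFree G) [Group.IsNilpotent G]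
    [Group.FG H] (hHtf : Monoid.IsTorsionFree H) [Group.IsNilpotent H]
    (T : Set H) (hT : (Subgroup.closure T).FiniteIndex)
    (Ψ₁ Ψ₂ : (G → ℝ) → (H → ℝ)) (h₁ : IsGoodHom Ψ₁) (h₂ : IsGoodHom Ψ₂)
    (hagree : ∀ ξ : G → ℝ, IsPolyMap ξ → ∀ t ∈ T, Ψ₁ ξ t = Ψ₂ ξ t) :
    ∀ ξ : G → ℝ, IsPolyMap ξ → Ψ₁ ξ = Ψ₂ ξ := by
  intro ξ hξp
  obtain ⟨d, hξ⟩ := hξp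
  funext h
  have hK := agree_on_closure h₁ h₂ T hagree d ξ hξ
  set D : H → ℝ := Ψ₁ ξ - Ψ₂ ξ with hD
  have hDpoly : IsPolyLe d D :=
    (h₁.2.2.2.2.2.1 d ξ hξ).sub (h₂.2.2.2.2.2.1 d ξ hξ)
  have hDK : ∀ x ∈ Subgroup.closure T, D x = 0 := by
    intro x hx
    rw [hD]
    simp only [Pi.sub_apply]
    rw [hK x hx]
    ring
  haveI : (Subgroup.closure T).FiniteIndex := hT
  set m := (Subgroup.closure T).normalCore.index with hm
  have hm0 : m ≠ 0 := Subgroup.FiniteIndex.index_ne_zero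
  have hpow : h ^ m ∈ Subgroup.closure T :=
    Subgroup.normalCore_le (Subgroup.closure T) (Subgroup.pow_index_mem _ h)
  have hVd : VdInt d (fun n : ℤ => D (h ^ n)) := by
    show dInt^[d + 1] (fun n : ℤ => D (h ^ n)) = 0
    funext n
    rw [foldr_replicate_dInt D h (d + 1) n,
      hDpoly (List.replicate (d + 1) h) (by simp)]
    rfl
  have hmul : ∀ k : ℤ, (fun n : ℤ => D (h ^ n)) ((m : ℤ) * k) = 0 := by
    intro k
    simp only
    rw [show h ^ ((m : ℤ) * k) = (h ^ m) ^ k from by rw [zpow_mul, zpow_natCast]]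
    exact hDK _ (zpow_mem hpow k)
  have hz := zero_of_multiples d (fun n : ℤ => D (h ^ n)) m
    (Nat.one_le_iff_ne_zero.mpr hm0) hVd hmul 1
  simp only [zpow_one] at hz
  rw [hD] at hz
  simp only [Pi.sub_apply] at hz
  linarith
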